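/- Let p be a prime, G a finite group, E a normal subgroup of G, and P a p-subgroup of G such that Q := P ∩ E is a Sylow p-subgroup of E. Let H := E ⋊ P be the external semidirect product for the conjugation action of P on E, and set ΔQ := {(x,x⁻¹) : x ∈ Q}. Then the product subgroup (ΔQ)(1×P) of H (which is a subgroup since ΔQ is normal in H) is a Sylow p-subgroup of H. -/

import Mathlib

open SemidirectProduct
open scoped Pointwise

/-- The conjugation action of a subgroup `P` on a normal subgroup `E`. -/
def conjAction {G : Type*} [Group G] (E P : Subgroup G) [E.Normal] : P →* MulAut E :=
  (MulAut.conjNormal (G := G) (H := E)).comp P.subtype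

/-- The element `(x, x⁻¹)` of `E ⋊ P`, for `x ∈ Q = P ∩ E`. -/
def deltaEl {G : Type*} [Group G] (E P : Subgroup G) [E.Normal] (x : ↥(P ⊓ E)) :
    E ⋊[conjAction E P] P :=
  ⟨⟨(x : G), x.2.2⟩, (⟨(x : G), x.2.1⟩ : P)⁻¹⟩

theorem stmt4 (p : ℕ) (hp : p.Prime) (G : Type*) [Group G] [Finite G]
    (E P : Subgroup G) [E.Normal] (hP : IsPGroup p P)
    -- `Q := P ∩ E` is a Sylow `p`-subgroup of `E`
    (hQ : ∃ S : Sylow p E, (S : Subgroup E) = (P ⊓ E).subgroupOf E) :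
    -- the product `(ΔQ)(1×P)` is a (subgroup, and a) Sylow `p`-subgroup of `H = E ⋊ P`
    ∃ T : Sylow p (E ⋊[conjAction E P] P),
      ((T : Subgroup (E ⋊[conjAction E P] P)) : Set (E ⋊[conjAction E P] P)) =
        Set.range (deltaEl E P) *
          Set.range (inr : P →* E ⋊[conjAction E P] P) := by
  haveI := Fact.mk hp
  set H := E ⋊[conjAction E P] P with hH
  -- the multiplication homomorphism φ : H →* G, (e, x) ↦ e * x
  have hcompat : ∀ g : ↥P, E.subtype.comp ((conjAction E P) g).toMonoidHom =
      (MulAut.conj (P.subtype g)).toMonoidHom.comp E.subtype := by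
    intro g
    ext e
    simp [conjAction]
  set φ : H →* G := lift E.subtype P.subtype hcompat with hφ
  have hφ_apply : ∀ z : H, φ z = (z.left : G) * (z.right : G) := fun z => rfl
  set K : Subgroup H := φ.ker with hK
  set R : Subgroup H := (inr : ↥P →* H).range with hR
  -- the kernel of φ is exactly ΔQ
  have hKset : (K : Set H) = Set.range (deltaEl E P) := by
    ext z
    constructor
    · intro hz
      have hz' : (z.left : G) * (z.right : G) = 1 := hz
      have hzl : (z.left : G) ∈ P := by
        have : (z.left : G) = ((z.right : G))⁻¹ := eq_inv_of_mul_eq_one_left hz'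
        rw [this]; exact inv_mem z.right.2
      refine ⟨⟨(z.left : G), ⟨hzl, z.left.2⟩⟩, ?_⟩
      refine SemidirectProduct.ext (Subtype.ext rfl) ?_
      apply Subtype.ext
      have h2 : ((z.left : G))⁻¹ = (z.right : G) := inv_eq_of_mul_eq_one_right hz'
      simpa [deltaEl] using h2
    · rintro ⟨x, rfl⟩
      show (_ : G) * _ = 1
      simp [deltaEl]
  have hRset : (R : Set H) = Set.range (inr : ↥P →* H) := rfl
  -- K is a p-group
  have hKp : IsPGroup p K := by
    intro g
    obtain ⟨k, hk⟩ := hP (rightHom (g : H))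
    refine ⟨k, ?_⟩
    have hmem : ((g : H) ^ p ^ k) ∈ K := pow_mem g.2 _
    have hright : ((g : H) ^ p ^ k).right = 1 := by
      have : rightHom ((g : H) ^ p ^ k) = 1 := by rw [map_pow, hk]
      exact this
    have hleft : ((g : H) ^ p ^ k).left = 1 := by
      have h1 : ((((g : H) ^ p ^ k).left : G)) * (((g : H) ^ p ^ k).right : G) = 1 := hmem
      rw [hright] at h1
      simpa using h1
    have : (g : H) ^ p ^ k = 1 := SemidirectProduct.ext hleft hright
    exact Subtype.ext (by rw [SubmonoidClass.coe_pow, this]; rfl)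
  -- R is a p-group
  have hRp : IsPGroup p R := hP.of_surjective inr.rangeRestrict inr.rangeRestrict_surjective
  haveI : K.Normal := φ.normal_ker
  set T₀ : Subgroup H := K ⊔ R with hT₀
  have hT₀p : IsPGroup p T₀ := IsPGroup.to_sup_of_normal_left hKp hRp
  have hT₀set : (T₀ : Set H) = Set.range (deltaEl E P) * Set.range (inr : ↥P →* H) := by
    rw [hT₀, Subgroup.normal_mul, hKset, hRset]
  -- H is finite
  have eHP : H ≃ ↥E × ↥P := ⟨fun h => (h.left, h.right), fun z => ⟨z.1, z.2⟩,
    fun h => rfl, fun z => rfl⟩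
  haveI : Finite H := Finite.of_equiv _ eHP.symm
  -- cardinality of T₀
  set f : ↥(P ⊓ E) × ↥P → H := fun z => deltaEl E P z.1 * inr z.2 with hf
  have hfval : ∀ z : ↥(P ⊓ E) × ↥P,
      f z = ⟨⟨(z.1 : G), z.1.2.2⟩, (⟨(z.1 : G), z.1.2.1⟩ : P)⁻¹ * z.2⟩ := by
    intro z
    refine SemidirectProduct.ext ?_ rfl
    show (_ : ↥E) * (conjAction E P) _ 1 = _
    simp [deltaEl]
  have hfinj : Function.Injective f := by
    rintro ⟨x₁, y₁⟩ ⟨x₂, y₂⟩ hxy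
    rw [hfval, hfval] at hxy
    have h1 : (x₁ : G) = (x₂ : G) :=
      congrArg (fun w => ((SemidirectProduct.left w : ↥E) : G)) hxy
    have hx : x₁ = x₂ := Subtype.ext h1
    subst hx
    have h2 := congrArg SemidirectProduct.right hxy
    simp only [mul_right_inj] at h2
    exact Prod.ext rfl h2
  have hfrange : Set.range f = (T₀ : Set H) := by
    rw [hT₀set]
    ext z
    constructor
    · rintro ⟨⟨x, y⟩, rfl⟩
      exact Set.mul_mem_mul ⟨x, rfl⟩ ⟨y, rfl⟩
    · rintro ⟨a, ⟨x, rfl⟩, b, ⟨y, rfl⟩, rfl⟩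
      exact ⟨⟨x, y⟩, rfl⟩
  have hcardT₀ : Nat.card T₀ = Nat.card ↥(P ⊓ E) * Nat.card ↥P := by
    have e1 : (↥(P ⊓ E) × ↥P) ≃ (T₀ : Set H) :=
      (Equiv.ofInjective f hfinj).trans (Equiv.setCongr hfrange)
    exact (Nat.card_congr e1.symm).trans (Nat.card_prod _ _)
  -- cardinality of H
  have hcardH : Nat.card H = Nat.card ↥E * Nat.card ↥P := by
    rw [Nat.card_congr eHP, Nat.card_prod]
  -- the Sylow subgroup Q of E
  obtain ⟨S, hS⟩ := hQ
  have hcardQ : Nat.card ↥(S : Subgroup E) = Nat.card ↥(P ⊓ E) := by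
    rw [hS]
    exact Nat.card_congr (Subgroup.subgroupOfEquivOfLe inf_le_right).toEquiv
  -- index computation
  have hidx : T₀.index = (S : Subgroup E).index := by
    have h1 : Nat.card T₀ * T₀.index = Nat.card H := Subgroup.card_mul_index T₀
    have h2 : Nat.card ↥(S : Subgroup E) * (S : Subgroup E).index = Nat.card ↥E :=
      Subgroup.card_mul_index _
    rw [hcardT₀, hcardH, ← h2, hcardQ] at h1
    have hpos : 0 < Nat.card ↥(P ⊓ E) * Nat.card ↥P :=
      Nat.mul_pos Nat.card_pos Nat.card_pos
    apply Nat.eq_of_mul_eq_mul_left hpos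
    calc Nat.card ↥(P ⊓ E) * Nat.card ↥P * T₀.index
        = Nat.card ↥(P ⊓ E) * Nat.card ↥P * T₀.index := rfl
      _ = Nat.card ↥(P ⊓ E) * (S : Subgroup E).index * Nat.card ↥P := h1
      _ = Nat.card ↥(P ⊓ E) * Nat.card ↥P * (S : Subgroup E).index := by ring
  haveI : Finite (Sylow p ↥E) := inferInstance
  have hnd : ¬ p ∣ T₀.index := by
    rw [hidx]
    exact S.not_dvd_index
  -- T₀ is contained in a Sylow subgroup, and equals it
  obtain ⟨T, hle⟩ := hT₀p.exists_le_sylow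
  have hrel1 : T₀.relIndex T ∣ T₀.index := Subgroup.relIndex_dvd_index_of_le hle
  have hrel2 : T₀.relIndex T ∣ Nat.card ↥(T : Subgroup H) :=
    Subgroup.index_dvd_card (T₀.subgroupOf (T : Subgroup H))
  obtain ⟨n, hn⟩ := IsPGroup.iff_card.mp T.2
  have hcop : Nat.Coprime (T₀.relIndex T) p := by
    rw [Nat.coprime_comm]
    exact hp.coprime_iff_not_dvd.mpr fun hd => hnd (hd.trans hrel1)
  have hone : T₀.relIndex T = 1 :=
    (hcop.pow_right n).eq_one_of_dvd (hn ▸ hrel2)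
  have hTeq : (T : Subgroup H) = T₀ :=
    le_antisymm (Subgroup.relIndex_eq_one.mp hone) hle
  exact ⟨T, by rw [hTeq, hT₀set]⟩
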